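/- (Theorem 1, upper bound, high-loss regime.) For every γ ∈ (0, 1/√2] and every γ-admissible triple (Π₀,Π₁,Π_∅), the guessing value satisfies V = (1/2)·Tr[ρ₀Π₀ + ρ₁Π₁] ≤ γ²·(1 + 1/√2)/2. -/

import Mathlib

open Matrix Complex Kronecker BigOperators ComplexOrder

noncomputable section

abbrev Mat2 := Matrix (Fin 2) (Fin 2) ℂ
abbrev Mat4 := Matrix (Fin 2 × Fin 2) (Fin 2 × Fin 2) ℂ

/-- Pauli X matrix -/
def PX : Mat2 := !![0, 1; 1, 0]

/-- Pauli Y matrix -/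
def PY : Mat2 := !![0, -Complex.I; Complex.I, 0]

/-- sign (−1)^b for a bit b -/
def bsign (b : Bool) : ℂ := if b then -1 else 1

/-- boolean function f(x̄,ȳ) = (x₁·y₁) XOR x₂ XOR y₂ -/
def fxy (x y : Bool × Bool) : Bool := (((x.1 && y.1)).xor x.2).xor y.2

/-- qubit input states ω_{x̄}: ω_{(0,x₂)} = (I+(−1)^{x₂}X)/2, ω_{(1,x₂)} = (I+(−1)^{x₂}Y)/2 -/
def omg (x : Bool × Bool) : Mat2 :=
  (1/2 : ℂ) • ((1 : Mat2) + bsign x.2 • (if x.1 then PY else PX))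

/-- qubit input states τ_{ȳ} = (I+(−1)^{y₂}(X+(−1)^{y₁}Y)/√2)/2 -/
def tau (y : Bool × Bool) : Mat2 :=
  (1/2 : ℂ) • ((1 : Mat2) + (bsign y.2 / (Real.sqrt 2 : ℂ)) • (PX + bsign y.1 • PY))

/-- averaged input states ρ₀ (for c = false) and ρ₁ (for c = true) -/
def rho (c : Bool) : Mat4 :=
  (1/8 : ℂ) • ∑ x : Bool × Bool, ∑ y : Bool × Bool,
    (if fxy x y = c then omg x ⊗ₖ tau y else 0)

/-- standard basis vectors of ℂ⁴ ≅ ℂ² ⊗ ℂ² -/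
def ket (i j : Fin 2) : (Fin 2 × Fin 2) → ℂ := fun p => if p = (i, j) then 1 else 0

def PhiP : (Fin 2 × Fin 2) → ℂ := fun p => (1 / (Real.sqrt 2 : ℂ)) * (ket 0 0 p + ket 1 1 p)
def PhiM : (Fin 2 × Fin 2) → ℂ := fun p => (1 / (Real.sqrt 2 : ℂ)) * (ket 0 0 p - ket 1 1 p)
def PsiP : (Fin 2 × Fin 2) → ℂ := fun p => (1 / (Real.sqrt 2 : ℂ)) * (ket 0 1 p + ket 1 0 p)
def PsiM : (Fin 2 × Fin 2) → ℂ := fun p => (1 / (Real.sqrt 2 : ℂ)) * (ket 0 1 p - ket 1 0 p)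

/-- rank one projector |v⟩⟨v| -/
def proj (v : (Fin 2 × Fin 2) → ℂ) : Mat4 := Matrix.vecMulVec v (star v)

/-- a γ-admissible measurement triple -/
def Admissible (γ : ℝ) (P0 P1 Pe : Mat4) : Prop :=
  P0.PosSemidef ∧ P1.PosSemidef ∧ Pe.PosSemidef ∧
  P0 + P1 + Pe = 1 ∧
  ∀ x y : Bool × Bool, ((omg x ⊗ₖ tau y) * Pe).trace = 1 - (γ : ℂ)^2

/-- guessing value V = (1/2)·Tr[ρ₀Π₀ + ρ₁Π₁] (a real number) -/
def Gval (P0 P1 : Mat4) : ℝ := (1/2) * ((rho false * P0 + rho true * P1).trace).re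

/-! ### Auxiliary lemmas for the proof -/

lemma omg_tau_apply' (x y : Bool × Bool) (i j k l : Fin 2) :
    (omg x ⊗ₖ tau y) (i,k) (j,l) = (omg x i j) * (tau y k l) := rfl

set_option maxHeartbeats 2000000 in
lemma sum_omgtau' : ∑ x : Bool × Bool, ∑ y : Bool × Bool, (omg x ⊗ₖ tau y)
    = (4:ℂ) • (1 : Mat4) := by
  ext ⟨i,k⟩ ⟨j,l⟩
  fin_cases i <;> fin_cases k <;> fin_cases j <;> fin_cases l <;>
  · simp only [Fintype.sum_prod_type, Fintype.sum_bool, Matrix.sum_apply, Matrix.smul_apply,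
      omg_tau_apply', omg, tau, bsign, PX, PY, Matrix.add_apply, Matrix.one_apply,
      Matrix.smul_apply, smul_eq_mul]
    norm_num [Prod.ext_iff]
    try ring_nf

def va' : (Fin 2 × Fin 2) → ℂ := fun p => if p = (0,0) then 1 else 0
def vb' : (Fin 2 × Fin 2) → ℂ := fun p => if p = (1,1) then 1 else 0
def wm' : (Fin 2 × Fin 2) → ℂ := fun p => if p = (0,1) then 1 else if p = (1,0) then -1 else 0
def wp' : (Fin 2 × Fin 2) → ℂ := fun p => if p = (0,1) then 1 else if p = (1,0) then 1 else 0
def Cm' : Matrix (Fin 6) (Fin 2 × Fin 2) ℂ :=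
  Matrix.of fun i p => if i ≤ 1 then va' p else if i ≤ 3 then vb' p else wm' p
def Cp' : Matrix (Fin 6) (Fin 2 × Fin 2) ℂ :=
  Matrix.of fun i p => if i ≤ 1 then va' p else if i ≤ 3 then vb' p else wp' p

set_option maxHeartbeats 4000000 in
lemma key_false' : (((1+1/Real.sqrt 2)/4 : ℝ):ℂ) • (1:Mat4) - rho false
    = (((1/(8*Real.sqrt 2)):ℝ):ℂ) • (Cm'ᴴ * Cm') := by
  have h2 : (Real.sqrt 2 : ℂ) * (Real.sqrt 2 : ℂ) = 2 := by
    norm_cast; exact Real.mul_self_sqrt (by norm_num)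
  have h2' : (Real.sqrt 2 : ℂ) ≠ 0 := by norm_cast; positivity
  have h4 : Real.sqrt 2 ^ 4 = 4 := by
    rw [show (4:ℕ) = 2*2 from rfl, pow_mul, Real.sq_sqrt] <;> norm_num
  ext ⟨i,k⟩ ⟨j,l⟩
  fin_cases i <;> fin_cases k <;> fin_cases j <;> fin_cases l <;>
  · simp only [rho, Fintype.sum_prod_type, Fintype.sum_bool, Matrix.sum_apply, Matrix.smul_apply,
      Matrix.sub_apply, Matrix.mul_apply, Fin.sum_univ_six, Cm', Matrix.of_apply,
      Matrix.conjTranspose_apply, Fin.reduceLE, if_true, if_false, Matrix.cons_val', Matrix.cons_val_zero, Matrix.cons_val_one,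
      Matrix.head_cons, Matrix.cons_val_fin_one, Matrix.cons_val_succ, Matrix.vecHead,
      Matrix.vecTail, va', vb', wm', fxy, omg_tau_apply', omg, tau, bsign, PX, PY, Matrix.add_apply,
      Matrix.one_apply, smul_eq_mul, Bool.false_and, Bool.true_and, Bool.false_xor, Bool.xor_false,
      Bool.true_xor, Bool.xor_true, Bool.not_false, Bool.not_true]
    norm_num [Prod.ext_iff, Complex.ext_iff]
    try field_simp
    try ring_nf
    try norm_num [h2, h4]

set_option maxHeartbeats 4000000 in
lemma key_true' : (((1+1/Real.sqrt 2)/4 : ℝ):ℂ) • (1:Mat4) - rho true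
    = (((1/(8*Real.sqrt 2)):ℝ):ℂ) • (Cp'ᴴ * Cp') := by
  have h2 : (Real.sqrt 2 : ℂ) * (Real.sqrt 2 : ℂ) = 2 := by
    norm_cast; exact Real.mul_self_sqrt (by norm_num)
  have h2' : (Real.sqrt 2 : ℂ) ≠ 0 := by norm_cast; positivity
  have h4 : Real.sqrt 2 ^ 4 = 4 := by
    rw [show (4:ℕ) = 2*2 from rfl, pow_mul, Real.sq_sqrt] <;> norm_num
  ext ⟨i,k⟩ ⟨j,l⟩
  fin_cases i <;> fin_cases k <;> fin_cases j <;> fin_cases l <;>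
  · simp only [rho, Fintype.sum_prod_type, Fintype.sum_bool, Matrix.sum_apply, Matrix.smul_apply,
      Matrix.sub_apply, Matrix.mul_apply, Fin.sum_univ_six, Cp', Matrix.of_apply,
      Matrix.conjTranspose_apply, Fin.reduceLE, if_true, if_false, Matrix.cons_val', Matrix.cons_val_zero, Matrix.cons_val_one,
      Matrix.head_cons, Matrix.cons_val_fin_one, Matrix.cons_val_succ, Matrix.vecHead,
      Matrix.vecTail, va', vb', wp', fxy, omg_tau_apply', omg, tau, bsign, PX, PY, Matrix.add_apply,
      Matrix.one_apply, smul_eq_mul, Bool.false_and, Bool.true_and, Bool.false_xor, Bool.xor_false,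
      Bool.true_xor, Bool.xor_true, Bool.not_false, Bool.not_true]
    norm_num [Prod.ext_iff, Complex.ext_iff]
    try field_simp
    try ring_nf
    try norm_num [h2, h4]

lemma trace_nonneg_of_psd' {n : Type*} [Fintype n] [DecidableEq n] {A : Matrix n n ℂ}
    (hA : A.PosSemidef) : 0 ≤ A.trace := by
  obtain ⟨B, rfl⟩ : ∃ B : Matrix n n ℂ, A = Bᴴ * B := by
    open scoped MatrixOrder in exact CStarAlgebra.nonneg_iff_eq_star_mul_self.mp hA.nonneg
  rw [Matrix.trace]
  refine Finset.sum_nonneg fun i _ => ?_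
  simp only [Matrix.diag_apply, Matrix.mul_apply, Matrix.conjTranspose_apply]
  exact Finset.sum_nonneg fun j _ => star_mul_self_nonneg _

lemma trace_mul_nonneg' {n : Type*} [Fintype n] [DecidableEq n] {A B : Matrix n n ℂ}
    (hA : A.PosSemidef) (hB : B.PosSemidef) : 0 ≤ (A * B).trace := by
  obtain ⟨C, rfl⟩ : ∃ C : Matrix n n ℂ, B = Cᴴ * C := by
    open scoped MatrixOrder in exact CStarAlgebra.nonneg_iff_eq_star_mul_self.mp hB.nonneg
  rw [← Matrix.mul_assoc, Matrix.trace_mul_cycle]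
  have := hA.conjTranspose_mul_mul_same Cᴴ
  rw [Matrix.conjTranspose_conjTranspose] at this
  exact trace_nonneg_of_psd' this

lemma psd_smul' {n : Type*} [Fintype n] {A : Matrix n n ℂ} (hA : A.PosSemidef) {r : ℝ}
    (hr : 0 ≤ r) : ((r:ℂ) • A).PosSemidef := by
  constructor
  · unfold Matrix.IsHermitian
    rw [Matrix.conjTranspose_smul, hA.1.eq]
    congr 1
    simp
  · intro x
    have h0 : (0:ℂ) ≤ (r:ℂ) := by exact_mod_cast Complex.zero_le_real.mpr hr
    exact (hA.smul h0).2 x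

/-- upper bound, high-loss regime: for γ ∈ (0, 1/√2] and any γ-admissible
triple, V ≤ γ²·(1 + 1/√2)/2. -/
theorem guessing_upper_bound_high_loss (γ : ℝ) (hγ : 0 < γ) (hγ' : γ ≤ 1/Real.sqrt 2)
    (P0 P1 Pe : Mat4) (h : Admissible γ P0 P1 Pe) :
    Gval P0 P1 ≤ γ^2 * (1 + 1/Real.sqrt 2)/2 := by
  obtain ⟨hP0, hP1, hPe, hsum, hconstr⟩ := h
  -- trace of the identity
  have htr1 : (1:Mat4).trace = 4 := by
    simp [Matrix.trace_one]
  -- trace of Pe from the constraints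
  have hPeTr : Pe.trace = 4 * (1 - (γ:ℂ)^2) := by
    have hsum16 : ∑ x : Bool × Bool, ∑ y : Bool × Bool, ((omg x ⊗ₖ tau y) * Pe).trace
        = 16 * (1 - (γ:ℂ)^2) := by
      simp only [hconstr]
      simp [Fintype.sum_prod_type, Fintype.sum_bool]; ring
    have hpush : ((∑ x : Bool × Bool, ∑ y : Bool × Bool, (omg x ⊗ₖ tau y)) * Pe).trace
        = ∑ x : Bool × Bool, ∑ y : Bool × Bool, ((omg x ⊗ₖ tau y) * Pe).trace := by
      rw [Finset.sum_mul, Matrix.trace_sum]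
      exact Finset.sum_congr rfl fun x _ => by rw [Finset.sum_mul, Matrix.trace_sum]
    rw [sum_omgtau'] at hpush
    rw [Matrix.smul_mul, Matrix.one_mul, Matrix.trace_smul, smul_eq_mul, hsum16] at hpush
    linear_combination hpush / 4
  -- trace of P0 + P1
  have hTr01 : P0.trace + P1.trace = 4 * (γ:ℂ)^2 := by
    have := congrArg Matrix.trace hsum
    rw [Matrix.trace_add, Matrix.trace_add, htr1, hPeTr] at this
    linear_combination this
  -- the dual certificate
  set c2 : ℝ := (1 + 1/Real.sqrt 2)/4 with hc2
  have hr : (0:ℝ) ≤ 1/(8*Real.sqrt 2) := by positivity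
  have hpsd0 : (((c2:ℝ):ℂ) • (1:Mat4) - rho false).PosSemidef := by
    rw [key_false']
    exact psd_smul' (Matrix.posSemidef_conjTranspose_mul_self Cm') hr
  have hpsd1 : (((c2:ℝ):ℂ) • (1:Mat4) - rho true).PosSemidef := by
    rw [key_true']
    exact psd_smul' (Matrix.posSemidef_conjTranspose_mul_self Cp') hr
  have h0 : 0 ≤ ((((c2:ℝ):ℂ) • (1:Mat4) - rho false) * P0).trace :=
    trace_mul_nonneg' hpsd0 hP0
  have h1 : 0 ≤ ((((c2:ℝ):ℂ) • (1:Mat4) - rho true) * P1).trace :=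
    trace_mul_nonneg' hpsd1 hP1
  rw [Matrix.sub_mul, Matrix.trace_sub, Matrix.smul_mul, Matrix.one_mul,
    Matrix.trace_smul, smul_eq_mul] at h0 h1
  -- pass to real parts
  have h0' : ((rho false * P0).trace).re ≤ c2 * (P0.trace).re := by
    have := (Complex.le_def.mp h0).1
    simpa [Complex.sub_re, Complex.re_ofReal_mul] using this
  have h1' : ((rho true * P1).trace).re ≤ c2 * (P1.trace).re := by
    have := (Complex.le_def.mp h1).1
    simpa [Complex.sub_re, Complex.re_ofReal_mul] using this
  have hTr01re : (P0.trace).re + (P1.trace).re = 4 * γ^2 := by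
    have := congrArg Complex.re hTr01
    simpa [Complex.add_re, ← Complex.ofReal_pow] using this
  have hG : Gval P0 P1 = (1/2) * (((rho false * P0).trace).re + ((rho true * P1).trace).re) := by
    rw [Gval, Matrix.trace_add, Complex.add_re]
  rw [hG]
  have hfinal : c2 * (P0.trace).re + c2 * (P1.trace).re = c2 * (4*γ^2) := by
    rw [← mul_add, hTr01re]
  have : ((rho false * P0).trace).re + ((rho true * P1).trace).re ≤ c2 * (4*γ^2) := by
    linarith
  calc (1/2) * (((rho false * P0).trace).re + ((rho true * P1).trace).re)
      ≤ (1/2) * (c2 * (4*γ^2)) := by linarith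
    _ = γ^2 * (1 + 1/Real.sqrt 2)/2 := by rw [hc2]; ring
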